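/- Let 0 < w₁ < w₂ and l > 0, and set z = (√w₁·l, √w₂·l) ∈ ℝ². For θ ∈ (0, π/2), let u = (cos θ, sin θ). Then the angle between u and z is greater than π/4 (equivalently (u·z)/(‖u‖‖z‖) < 1/√2) if and only if θ < (1/2)·arctan((w₂ − w₁)/(2√(w₁w₂))). -/

import Mathlib

open Real

lemma sin_lt_sin_pi_div_four_iff (x : ℝ) (h0 : 0 < x) (h1 : x < π / 2 + π / 4) :
    Real.sin x < Real.sin (π / 4) ↔ x < π / 4 := by
  have hpi := Real.pi_pos
  constructor
  · intro h
    by_contra hc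
    push_neg at hc
    rcases le_or_gt x (π / 2) with hx | hx
    · have := Real.strictMonoOn_sin.monotoneOn
        (by constructor <;> linarith : π / 4 ∈ Set.Icc (-(π/2)) (π/2))
        (by constructor <;> linarith : x ∈ Set.Icc (-(π/2)) (π/2)) hc
      linarith
    · have heq : Real.sin x = Real.sin (π - x) := (Real.sin_pi_sub x).symm
      have h2 := Real.strictMonoOn_sin.monotoneOn
        (by constructor <;> linarith : π / 4 ∈ Set.Icc (-(π/2)) (π/2))
        (by constructor <;> linarith : π - x ∈ Set.Icc (-(π/2)) (π/2))
        (by linarith : π / 4 ≤ π - x)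
      rw [heq] at h; linarith
  · intro h
    exact Real.strictMonoOn_sin
      (by constructor <;> linarith : x ∈ Set.Icc (-(π/2)) (π/2))
      (by constructor <;> linarith : π / 4 ∈ Set.Icc (-(π/2)) (π/2)) h

/-- for the square-type net with weights `w₁ < w₂` and
`z = (√w₁·l, √w₂·l)`, the angle between `u = (cos θ, sin θ)` and `z`
exceeds `π/4` iff `θ < (1/2) arctan ((w₂ - w₁)/(2√(w₁w₂)))`. -/
theorem stmt_1 (w₁ w₂ l : ℝ) (hw₁ : 0 < w₁) (hw : w₁ < w₂) (hl : 0 < l)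
    (θ : ℝ) (hθ : θ ∈ Set.Ioo 0 (π / 2)) :
    (Real.cos θ * (Real.sqrt w₁ * l) + Real.sin θ * (Real.sqrt w₂ * l)) /
        (Real.sqrt (Real.cos θ ^ 2 + Real.sin θ ^ 2) *
          Real.sqrt ((Real.sqrt w₁ * l) ^ 2 + (Real.sqrt w₂ * l) ^ 2)) < 1 / Real.sqrt 2 ↔
      θ < (1 / 2) * Real.arctan ((w₂ - w₁) / (2 * Real.sqrt (w₁ * w₂))) := by
  obtain ⟨hθ0, hθ2⟩ := hθ
  have hpi := Real.pi_pos
  have hw₂ : 0 < w₂ := hw₁.trans hw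
  set a := Real.sqrt w₁ with ha_def
  set b := Real.sqrt w₂ with hb_def
  have ha : 0 < a := Real.sqrt_pos.mpr hw₁
  have hb : 0 < b := Real.sqrt_pos.mpr hw₂
  have hab : a < b := Real.sqrt_lt_sqrt hw₁.le hw
  have ha2 : a ^ 2 = w₁ := Real.sq_sqrt hw₁.le
  have hb2 : b ^ 2 = w₂ := Real.sq_sqrt hw₂.le
  have hsab : Real.sqrt (w₁ * w₂) = a * b := Real.sqrt_mul hw₁.le w₂
  set r := Real.sqrt (a ^ 2 + b ^ 2) with hr_def
  have hr : 0 < r := Real.sqrt_pos.mpr (by positivity)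
  have hr2 : r ^ 2 = a ^ 2 + b ^ 2 := Real.sq_sqrt (by positivity)
  set φ := Real.arctan (a / b) with hφ_def
  have ht : Real.tan φ = a / b := Real.tan_arctan _
  have hφ0 : 0 < φ := by
    have := Real.arctan_strictMono (show (0:ℝ) < a / b from div_pos ha hb)
    rwa [Real.arctan_zero] at this
  have hφ4 : φ < π / 4 := by
    rw [hφ_def, ← Real.arctan_one]
    exact Real.arctan_strictMono ((div_lt_one hb).mpr hab)
  -- simplify the denominator pieces
  have hden1 : Real.sqrt (Real.cos θ ^ 2 + Real.sin θ ^ 2) = 1 := by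
    rw [Real.cos_sq_add_sin_sq, Real.sqrt_one]
  have hden2 : Real.sqrt ((a * l) ^ 2 + (b * l) ^ 2) = r * l := by
    rw [show (a * l) ^ 2 + (b * l) ^ 2 = (a ^ 2 + b ^ 2) * l ^ 2 by ring,
      Real.sqrt_mul (by positivity), Real.sqrt_sq hl.le]
  -- cos and sin of φ
  have h1b : Real.sqrt (1 + (a / b) ^ 2) = r / b := by
    rw [show 1 + (a / b) ^ 2 = (a ^ 2 + b ^ 2) / b ^ 2 by field_simp; ring,
      Real.sqrt_div (by positivity), Real.sqrt_sq hb.le]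
  have hcosφ : Real.cos φ = b / r := by
    rw [hφ_def, Real.cos_arctan, h1b]
    field_simp
  have hsinφ : Real.sin φ = a / r := by
    rw [hφ_def, Real.sin_arctan, h1b]
    field_simp
  -- key: numerator as r * sin (θ + φ)
  have hkey : Real.cos θ * (a * l) + Real.sin θ * (b * l) = (r * l) * Real.sin (θ + φ) := by
    rw [Real.sin_add, hcosφ, hsinφ]
    field_simp
    ring
  -- the left side is sin (θ + φ) < sin (π/4)
  have hlhs : (Real.cos θ * (a * l) + Real.sin θ * (b * l)) /
        (Real.sqrt (Real.cos θ ^ 2 + Real.sin θ ^ 2) *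
          Real.sqrt ((a * l) ^ 2 + (b * l) ^ 2)) = Real.sin (θ + φ) := by
    rw [hden1, hden2, hkey, one_mul, mul_comm (r * l), mul_div_assoc,
      div_self (by positivity : (r : ℝ) * l ≠ 0), mul_one]
  have hsqrt2 : (1 : ℝ) / Real.sqrt 2 = Real.sin (π / 4) := by
    rw [Real.sin_pi_div_four]
    rw [show Real.sqrt 2 / 2 = Real.sqrt 2 / (Real.sqrt 2 * Real.sqrt 2) by
      rw [Real.mul_self_sqrt (by norm_num)]]
    rw [div_mul_eq_div_div_swap, div_self (by positivity)]
  -- right side equals π/4 - φ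
  have harctan : Real.arctan ((w₂ - w₁) / (2 * Real.sqrt (w₁ * w₂))) = π / 2 - 2 * φ := by
    have htan : Real.tan (π / 2 - 2 * φ) = (w₂ - w₁) / (2 * Real.sqrt (w₁ * w₂)) := by
      rw [Real.tan_pi_div_two_sub, Real.tan_two_mul, ht, hsab, ← ha2, ← hb2]
      have h1 : (1 : ℝ) - (a / b) ^ 2 ≠ 0 := by
        have : (a / b) ^ 2 < 1 := by
          rw [div_pow, div_lt_one (by positivity)]
          nlinarith
        linarith
      field_simp
    rw [← htan, Real.arctan_tan (by linarith) (by linarith)]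
  rw [hlhs, hsqrt2, harctan,
    sin_lt_sin_pi_div_four_iff (θ + φ) (by linarith) (by linarith)]
  constructor <;> intro h <;> linarith
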